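/- Let n ≥ 3 and m ≥ 2 be integers, let k₂ > 0 and c, c₁ ∈ ℝ, and set λ_F = (n−2)k₂² and λ̃ = −(m−n+1)(n−2)k₂²/(2(n−1)). Define Ψ(t) = k₂ t^{1/2} and H(t) = ((n−2)/8)(ln t)² + c ln t + c₁ on (0,∞). Then Ψ and H satisfy the Schouten ODE system (E1)–(E3) for all t ∈ (0,∞). -/

import Mathlib

open Real Set Filter

private lemma deriv_congr_Ioi {f g : ℝ → ℝ} (h : ∀ y ∈ Set.Ioi (0:ℝ), f y = g y)
    {x : ℝ} (hx : 0 < x) : deriv f x = deriv g x := by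
  apply Filter.EventuallyEq.deriv_eq
  filter_upwards [Ioi_mem_nhds hx] with y hy using h y hy

private lemma psi_deriv (k₂ : ℝ) {x : ℝ} (hx : 0 < x) :
    HasDerivAt (fun t : ℝ => k₂ * t ^ (1/2 : ℝ)) (k₂ * ((1/2) * x ^ (-(1/2) : ℝ))) x := by
  have h := (Real.hasDerivAt_rpow_const (p := (1/2 : ℝ)) (Or.inl hx.ne')).const_mul k₂
  refine h.congr_deriv ?_
  norm_num

private lemma psi_deriv2 (k₂ : ℝ) {x : ℝ} (hx : 0 < x) :
    HasDerivAt (fun t : ℝ => k₂ * ((1/2) * t ^ (-(1/2) : ℝ)))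
      (k₂ * ((1/2) * (-(1/2) * x ^ (-(3/2) : ℝ)))) x := by
  have h := ((Real.hasDerivAt_rpow_const (p := (-(1/2) : ℝ)) (Or.inl hx.ne')).const_mul
    (1/2 : ℝ)).const_mul k₂
  refine h.congr_deriv ?_
  norm_num

private lemma H_deriv (A c c₁ : ℝ) {x : ℝ} (hx : 0 < x) :
    HasDerivAt (fun t : ℝ => A * (Real.log t) ^ 2 + c * Real.log t + c₁)
      (A * (2 * Real.log x * x⁻¹) + c * x⁻¹) x := by
  have hlog := Real.hasDerivAt_log hx.ne'
  have h := (((hlog.pow 2).const_mul A).add (hlog.const_mul c)).add_const c₁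
  refine h.congr_deriv ?_
  norm_num

private lemma H_deriv2 (A c : ℝ) {x : ℝ} (hx : 0 < x) :
    HasDerivAt (fun t : ℝ => A * (2 * Real.log t * t⁻¹) + c * t⁻¹)
      (A * (2 * (x⁻¹ * x⁻¹) + 2 * Real.log x * (-(x⁻¹ * x⁻¹))) + c * (-(x⁻¹ * x⁻¹))) x := by
  have hlog := Real.hasDerivAt_log hx.ne'
  have hinv := hasDerivAt_inv hx.ne'
  have h := (((((hlog.const_mul 2).mul hinv)).const_mul A).add (hinv.const_mul c))
  refine h.congr_deriv ?_
  ring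

/-- The Schouten ODE system (E1)–(E3) at a point `t`, for dimension parameters `n`, `m`
and real constants `lF` (= λ_F) and `lt` (= λ̃). -/
def SchoutenODE (n m : ℕ) (lF lt : ℝ) (Ψ H : ℝ → ℝ) (t : ℝ) : Prop :=
  -- (E1)
  (((n : ℝ) - 2) * deriv (deriv Ψ) t + Ψ t * deriv (deriv H) t
      + 2 * deriv Ψ t * deriv H t = 0) ∧
  -- (E2)
  (Ψ t * (((n : ℝ) - 2) * deriv Ψ t + Ψ t * deriv H t)
      + t * ((2 - (n : ℝ)) * (deriv Ψ t) ^ 2 - 2 * Ψ t * deriv Ψ t * deriv H t)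
      = lF * (m : ℝ) / (4 * ((n : ℝ) - 1)) + lt / 2) ∧
  -- (E3)
  (-((n : ℝ) * Ψ t * deriv Ψ t)
      + 2 * t * (((n : ℝ) / 2) * (deriv Ψ t) ^ 2 - Ψ t * deriv (deriv Ψ) t)
      = lF * ((m : ℝ) - 2 * (n : ℝ) + 2) / (4 * ((n : ℝ) - 1)) + lt / 2)

theorem stmt_10 (n m : ℕ) (hn : 3 ≤ n) (hm : 2 ≤ m)
    (k₂ : ℝ) (hk₂ : 0 < k₂) (c c₁ : ℝ)
    (lF : ℝ) (hlF : lF = ((n : ℝ) - 2) * k₂ ^ 2)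
    (lt : ℝ) (hlt : lt = -(((m : ℝ) - (n : ℝ) + 1) * ((n : ℝ) - 2) * k₂ ^ 2) / (2 * ((n : ℝ) - 1)))
    (Ψ H : ℝ → ℝ)
    (hΨdef : ∀ t ∈ Set.Ioi (0 : ℝ), Ψ t = k₂ * t ^ (1 / 2 : ℝ))
    (hHdef : ∀ t ∈ Set.Ioi (0 : ℝ),
      H t = ((n : ℝ) - 2) / 8 * (Real.log t) ^ 2 + c * Real.log t + c₁) :
    ∀ t ∈ Set.Ioi (0 : ℝ), SchoutenODE n m lF lt Ψ H t := by
  set A : ℝ := ((n : ℝ) - 2) / 8 with hA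
  -- first derivatives on Ioi 0
  have hΨ' : ∀ y ∈ Set.Ioi (0:ℝ), deriv Ψ y = k₂ * ((1/2) * y ^ (-(1/2) : ℝ)) := by
    intro y hy
    rw [deriv_congr_Ioi hΨdef hy, (psi_deriv k₂ hy).deriv]
  have hH' : ∀ y ∈ Set.Ioi (0:ℝ),
      deriv H y = A * (2 * Real.log y * y⁻¹) + c * y⁻¹ := by
    intro y hy
    rw [deriv_congr_Ioi hHdef hy, (H_deriv A c c₁ hy).deriv]
  intro t ht
  have htpos : (0:ℝ) < t := ht
  have ht0 : t ≠ 0 := htpos.ne'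
  -- second derivatives at t
  have hΨ'' : deriv (deriv Ψ) t = k₂ * ((1/2) * (-(1/2) * t ^ (-(3/2) : ℝ))) := by
    rw [deriv_congr_Ioi hΨ' htpos, (psi_deriv2 k₂ htpos).deriv]
  have hH'' : deriv (deriv H) t
      = A * (2 * (t⁻¹ * t⁻¹) + 2 * Real.log t * (-(t⁻¹ * t⁻¹))) + c * (-(t⁻¹ * t⁻¹)) := by
    rw [deriv_congr_Ioi hH' htpos, (H_deriv2 A c htpos).deriv]
  -- abbreviations
  set s : ℝ := t ^ (1/2 : ℝ) with hs
  have hspos : 0 < s := Real.rpow_pos_of_pos htpos _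
  have hs0 : s ≠ 0 := hspos.ne'
  have hss : s * s = t := by
    rw [hs, ← Real.rpow_add htpos]; norm_num
  have hneg : t ^ (-(1/2) : ℝ) = s⁻¹ := by
    rw [Real.rpow_neg htpos.le]
  have hneg3 : t ^ (-(3/2) : ℝ) = (s * s * s)⁻¹ := by
    have h1 : s * s * s = t ^ ((3:ℝ)/2) := by
      rw [hs, ← Real.rpow_add htpos, ← Real.rpow_add htpos]; norm_num
    rw [h1, ← Real.rpow_neg htpos.le]
  have hinv : t⁻¹ = (s*s)⁻¹ := by rw [hss]
  have hΨt := hΨdef t ht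
  have hΨ't := hΨ' t ht
  have hH't := hH' t ht
  have hn1 : ((n:ℝ) - 1) ≠ 0 := by
    have h3 : (3:ℝ) ≤ (n:ℝ) := by exact_mod_cast hn
    nlinarith
  set L : ℝ := Real.log t with hL
  refine ⟨?_, ?_, ?_⟩
  · rw [hΨt, hΨ't, hH't, hΨ'', hH'', hneg, hneg3, hinv, ← hs, hA]
    field_simp
    ring
  · rw [hΨt, hΨ't, hH't, hneg, hinv, ← hs, hlF, hlt, hA, ← hss]
    field_simp
    ring
  · rw [hΨt, hΨ't, hΨ'', hneg, hneg3, ← hs, hlF, hlt, ← hss]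
    field_simp
    ring
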